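/- Let C be a triangulated category, n ≥ 1 an integer, and 𝓜_1, …, 𝓜_n extension-closed full additive subcategories closed under isomorphisms such that every object of C admits a right minimal right 𝓜_i-approximation for each i, and Hom(M_i, ΣM_j) = 0 for all M_i ∈ 𝓜_i, M_j ∈ 𝓜_j whenever i < j. Put 𝒳_n := add(𝓜_1 ∗ 𝓜_2 ∗ ⋯ ∗ 𝓜_n) and 𝒴_n := ⋂_{i=1}^{n} 𝓜_i^⊥. Then (𝒳_n, 𝒴_n) is a torsion pair in C. -/

import Mathlib

open CategoryTheory Category Limits Pretriangulated ZeroObject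

variable {C : Type*} [Category C] [Preadditive C] [HasZeroObject C]
  [HasShift C ℤ] [∀ n : ℤ, (shiftFunctor C n).Additive] [Pretriangulated C]
  [IsTriangulated C] [HasBinaryBiproducts C]

/-- `f : A ⟶ B` is a right `X`-approximation of `B`. -/
def IsRightApprox (X : Set C) {A B : C} (f : A ⟶ B) : Prop :=
  A ∈ X ∧ ∀ A' : C, A' ∈ X → ∀ g : A' ⟶ B, ∃ h : A' ⟶ A, h ≫ f = g

/-- `X` is extension closed. -/
def ExtensionClosed (X : Set C) : Prop :=
  ∀ ⦃A B Z : C⦄ (f : A ⟶ B) (g : B ⟶ Z) (h : Z ⟶ A⟦(1 : ℤ)⟧),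
    (Triangle.mk f g h ∈ distTriang C) → A ∈ X → Z ∈ X → B ∈ X

/-- `(X, Y)` is a torsion pair. -/
def TorsionPair (X Y : Set C) : Prop :=
  (∀ a ∈ X, ∀ b ∈ Y, ∀ f : a ⟶ b, f = 0) ∧
  ∀ Z : C, ∃ (A B : C) (_ : A ∈ X) (_ : B ∈ Y) (f : A ⟶ Z) (g : Z ⟶ B)
    (h : B ⟶ A⟦(1 : ℤ)⟧), Triangle.mk f g h ∈ distTriang C

/-- `star A B` is the class of objects `E` admitting a distinguished triangle
`X ⟶ E ⟶ Y ⟶ ΣX` with `X ∈ A`, `Y ∈ B`. -/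
def star (A B : Set C) : Set C :=
  {E : C | ∃ (X Y : C) (_ : X ∈ A) (_ : Y ∈ B) (f : X ⟶ E) (g : E ⟶ Y)
    (h : Y ⟶ X⟦(1 : ℤ)⟧), Triangle.mk f g h ∈ distTriang C}

/-- `AddClosure W` is the closure of `W` under finite direct sums, direct summands
and isomorphisms (`add W`). -/
inductive AddClosure (W : Set C) : C → Prop
  | of (X : C) (hX : X ∈ W) : AddClosure W X
  | zero (X : C) (hX : IsZero X) : AddClosure W X
  | biprod (X Y : C) (hX : AddClosure W X) (hY : AddClosure W Y) : AddClosure W (X ⊞ Y)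
  | summand (X Y : C) (hY : AddClosure W Y) (i : X ⟶ Y) (r : Y ⟶ X)
      (hir : i ≫ r = 𝟙 X) : AddClosure W X

set_option linter.unusedSectionVars false in
/-- Wakamatsu's lemma: the cone of a right minimal right `M`-approximation lies
in `M^⊥`, for `M` extension closed. -/
lemma wakamatsu (M : Set C) (hext : ExtensionClosed M) {B Z Y : C} (f : B ⟶ Z)
    (happ : IsRightApprox M f) (hmin : ∀ e : B ⟶ B, e ≫ f = f → IsIso e)
    (g : Z ⟶ Y) (w : Y ⟶ B⟦(1 : ℤ)⟧) (hT : Triangle.mk f g w ∈ distTriang C) :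
    ∀ m ∈ M, ∀ a : m ⟶ Y, a = 0 := by
  intro m hm a
  obtain ⟨E, i, p, hTE⟩ := distinguished_cocone_triangle₂ (a ≫ w)
  have hE : E ∈ M := hext i p (a ≫ w) hTE happ.1 hm
  obtain ⟨e, he₁, -⟩ := complete_distinguished_triangle_morphism₂
    (Triangle.mk i p (a ≫ w)) (Triangle.mk f g w) hTE hT (𝟙 B) a (by change (a ≫ w) ≫ (shiftFunctor C (1:ℤ)).map (𝟙 B) = a ≫ w; simp)
  change i ≫ e = 𝟙 B ≫ f at he₁
  rw [id_comp] at he₁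
  obtain ⟨s, hs⟩ := happ.2 E hE e
  have his : IsIso (i ≫ s) := hmin _ (by rw [assoc, hs]; exact he₁)
  have h0 : (a ≫ w) ≫ i⟦(1:ℤ)⟧' = 0 := comp_distTriang_mor_zero₃₁ _ hTE
  have hq : a ≫ w = 0 := by
    rw [← cancel_mono ((i ≫ s)⟦(1:ℤ)⟧')]
    rw [Functor.map_comp, ← assoc, h0, zero_comp, zero_comp]
  obtain ⟨b, hb⟩ := Triangle.coyoneda_exact₃ _ hT a hq
  obtain ⟨c, hc⟩ := happ.2 m hm b
  have hfg : f ≫ g = 0 := comp_distTriang_mor_zero₁₂ _ hT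
  change a = b ≫ g at hb
  rw [hb, ← hc]; exact (assoc _ _ _).trans ((whisker_eq c hfg).trans comp_zero)

/-- Gluing two distinguished triangles via the octahedral axiom. -/
lemma glue {X' Cc C' m Y : C} (a : X' ⟶ Cc) (u : Cc ⟶ C') (b : C' ⟶ X'⟦(1:ℤ)⟧)
    (hA : Triangle.mk a u b ∈ distTriang C)
    (f : m ⟶ C') (g : C' ⟶ Y) (w : Y ⟶ m⟦(1:ℤ)⟧)
    (hB : Triangle.mk f g w ∈ distTriang C) :
    ∃ (X : C) (x₁ : X' ⟶ X) (x₂ : X ⟶ m) (x₃ : m ⟶ X'⟦(1:ℤ)⟧)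
      (f' : X ⟶ Cc) (g' : Cc ⟶ Y) (h' : Y ⟶ X⟦(1:ℤ)⟧),
      (Triangle.mk x₁ x₂ x₃ ∈ distTriang C) ∧ (Triangle.mk f' g' h' ∈ distTriang C) := by
  have hA2 := inv_rot_of_distTriang _ (inv_rot_of_distTriang _ hA)
  have hB2 := inv_rot_of_distTriang _ (inv_rot_of_distTriang _ hB)
  set TA2 := (Triangle.mk a u b).invRotate.invRotate with hTA2
  set TB2 := (Triangle.mk f g w).invRotate.invRotate with hTB2
  obtain ⟨Z, v, wZ, hZ⟩ := distinguished_cocone_triangle (TA2.mor₁ ≫ TB2.mor₁)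
  have H := Triangulated.someOctahedron rfl hA2 hB2 hZ
  have hT1 : Triangle.mk H.m₁ H.m₃ (TB2.mor₃ ≫ TA2.mor₂⟦(1:ℤ)⟧') ∈ distTriang C := H.mem
  have hrot := rot_of_distTriang _ (rot_of_distTriang _ hZ)
  let eC : (Cc⟦(-1:ℤ)⟧)⟦(1:ℤ)⟧ ≅ Cc := (shiftEquiv C (1:ℤ)).counitIso.app Cc
  let eY : (Y⟦(-1:ℤ)⟧)⟦(1:ℤ)⟧ ≅ Y := (shiftEquiv C (1:ℤ)).counitIso.app Y
  let Tfin : Triangle C := Triangle.mk (wZ ≫ eC.hom)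
    (eC.inv ≫ (-(TA2.mor₁ ≫ TB2.mor₁)⟦(1:ℤ)⟧') ≫ eY.hom)
    (eY.inv ≫ (-(v⟦(1:ℤ)⟧')))
  have hT2 : Tfin ∈ distTriang C := by
    refine isomorphic_distinguished _ hrot _ ?_
    exact Triangle.isoMk _ _ (Iso.refl Z) eC.symm eY.symm
      (by change (wZ ≫ eC.hom) ≫ eC.inv = 𝟙 Z ≫ wZ; exact (assoc _ _ _).trans (((whisker_eq wZ eC.hom_inv_id).trans (comp_id _)).trans (id_comp _).symm)) (by change (eC.inv ≫ (-(TA2.mor₁ ≫ TB2.mor₁)⟦(1:ℤ)⟧') ≫ eY.hom) ≫ eY.inv = eC.inv ≫ (-(TA2.mor₁ ≫ TB2.mor₁)⟦(1:ℤ)⟧'); exact (assoc _ _ _).trans (whisker_eq eC.inv ((assoc _ _ _).trans ((whisker_eq _ eY.hom_inv_id).trans (comp_id _))))) (by change (eY.inv ≫ (-(v⟦(1:ℤ)⟧'))) ≫ (shiftFunctor C (1:ℤ)).map (𝟙 Z) = eY.inv ≫ (-(v⟦(1:ℤ)⟧')); simp)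
  exact ⟨Z, H.m₁, H.m₃, TB2.mor₃ ≫ TA2.mor₂⟦(1:ℤ)⟧', wZ ≫ eC.hom,
    eC.inv ≫ (-(TA2.mor₁ ≫ TB2.mor₁)⟦(1:ℤ)⟧') ≫ eY.hom,
    eY.inv ≫ (-(v⟦(1:ℤ)⟧')), hT1, hT2⟩

/-- Existence of the torsion triangle, by induction on the list of subcategories. -/
lemma exists_torsion_triangle (M0 : Set C) (Ms : List (Set C)) :
    (∀ A ∈ M0 :: Ms, ExtensionClosed A) →
    (∀ A ∈ M0 :: Ms, ∀ Cobj : C, ∃ (B : C) (f : B ⟶ Cobj),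
      IsRightApprox A f ∧ ∀ e : B ⟶ B, e ≫ f = f → IsIso e) →
    ((M0 :: Ms).Pairwise (fun A B => ∀ a ∈ A, ∀ b ∈ B, ∀ f : a ⟶ b⟦(1 : ℤ)⟧, f = 0)) →
    ∀ Z : C, ∃ (A B : C) (_ : A ∈ Ms.foldl star M0)
      (_ : ∀ S ∈ M0 :: Ms, ∀ a ∈ S, ∀ f : a ⟶ B, f = 0)
      (f : A ⟶ Z) (g : Z ⟶ B) (h : B ⟶ A⟦(1:ℤ)⟧), Triangle.mk f g h ∈ distTriang C := by
  induction Ms using List.reverseRecOn with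
  | nil =>
    intro hext happrox _ Z
    obtain ⟨B, f, happ, hmin⟩ := happrox M0 (by simp) Z
    obtain ⟨Y, g, w, hT⟩ := distinguished_cocone_triangle f
    have hY := wakamatsu M0 (hext M0 (by simp)) f happ hmin g w hT
    refine ⟨B, Y, happ.1, ?_, f, g, w, hT⟩
    intro S hS s hs φ
    simp only [List.mem_singleton] at hS
    subst hS
    exact hY s hs φ
  | append_singleton L Mn IH =>
    intro hext happrox hvanish Z
    have hsub : ∀ A ∈ M0 :: L, A ∈ M0 :: (L ++ [Mn]) := by
      intro A hA; simp only [List.mem_cons, List.mem_append] at hA ⊢; tauto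
    have hvan' : (M0 :: L).Pairwise
        (fun A B => ∀ a ∈ A, ∀ b ∈ B, ∀ f : a ⟶ b⟦(1 : ℤ)⟧, f = 0) := by
      refine List.Pairwise.sublist ?_ hvanish
      exact (L.sublist_append_left [Mn]).cons₂ M0
    have hlast : ∀ A ∈ M0 :: L, ∀ x ∈ A, ∀ y ∈ Mn, ∀ φ : x ⟶ y⟦(1:ℤ)⟧, φ = 0 := by
      have h := List.pairwise_append.mp
        (show ((M0 :: L) ++ [Mn]).Pairwise _ from hvanish)
      intro A hA x hx y hy φ
      exact h.2.2 A hA Mn (by simp) x hx y hy φ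
    obtain ⟨X', C', hX', hC', a, u, b, hTA⟩ :=
      IH (fun A hA => hext A (hsub A hA)) (fun A hA => happrox A (hsub A hA)) hvan' Z
    obtain ⟨B, f, happ, hmin⟩ := happrox Mn (by simp) C'
    obtain ⟨Y, g, w, hTB⟩ := distinguished_cocone_triangle f
    have hYMn := wakamatsu Mn (hext Mn (by simp)) f happ hmin g w hTB
    obtain ⟨X, x₁, x₂, x₃, f', g', h', hT1, hT2⟩ := glue a u b hTA f g w hTB
    refine ⟨X, Y, ?_, ?_, f', g', h', hT2⟩
    · rw [List.foldl_append]
      exact ⟨X', B, hX', happ.1, x₁, x₂, x₃, hT1⟩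
    · intro S hS s hs φ
      have hS' : S ∈ M0 :: L ∨ S = Mn := by
        simp only [List.mem_cons, List.mem_append, List.mem_singleton] at hS ⊢; tauto
      rcases hS' with h | rfl
      · have hvw : φ ≫ w = 0 := hlast S h s hs B happ.1 (φ ≫ w)
        obtain ⟨ψ, hψ⟩ := Triangle.coyoneda_exact₂ _ (rot_of_distTriang _ hTB) φ hvw
        rw [hψ, hC' S h s hs ψ]; exact zero_comp
      · exact hYMn s hs φ

/-- Vanishing of morphisms from the star class to the perpendicular class. -/
lemma star_vanish (M0 : Set C) (Ms : List (Set C)) :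
    ∀ N : C, (∀ S ∈ M0 :: Ms, ∀ a ∈ S, ∀ f : a ⟶ N, f = 0) →
    ∀ E ∈ Ms.foldl star M0, ∀ f : E ⟶ N, f = 0 := by
  induction Ms using List.reverseRecOn with
  | nil => intro N hN E hE f; exact hN M0 (by simp) E hE f
  | append_singleton L Mn IH =>
    intro N hN E hE f
    rw [List.foldl_append] at hE
    obtain ⟨X, m, hX, hm, i, p, q, hT⟩ := hE
    have hif : i ≫ f = 0 := IH N
      (fun S hS => hN S (by simp only [List.mem_cons, List.mem_append,
        List.mem_singleton] at hS ⊢; tauto)) X hX (i ≫ f)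
    obtain ⟨k, hk⟩ := Triangle.yoneda_exact₂ _ hT f hif
    rw [hk, hN Mn (by simp) m hm k]; exact comp_zero

set_option linter.unusedSectionVars false in
/-- Vanishing passes to the additive closure. -/
lemma addClosure_vanish {W : Set C} {N : C}
    (hW : ∀ E ∈ W, ∀ f : E ⟶ N, f = 0) :
    ∀ E, AddClosure W E → ∀ f : E ⟶ N, f = 0 := by
  intro E hE
  induction hE with
  | of X hX => exact hW X hX
  | zero X hX => intro f; exact hX.eq_of_src f 0
  | biprod X Y hX hY ihX ihY =>
    intro f
    refine biprod.hom_ext' _ _ ?_ ?_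
    · rw [ihX (biprod.inl ≫ f), comp_zero]
    · rw [ihY (biprod.inr ≫ f), comp_zero]
  | summand X Y hY i r hir ih =>
    intro f
    have : f = i ≫ (r ≫ f) := by rw [← assoc, hir, id_comp]
    rw [this, ih (r ≫ f), comp_zero]

/-- for extension-closed subcategories `M₀, …, Mₙ₋₁` admitting right
minimal right approximations with `Hom(Mᵢ, ΣMⱼ) = 0` for `i < j`, the pair
`(add(M₀ ∗ ⋯ ∗ Mₙ₋₁), ⋂ᵢ Mᵢ^⊥)` is a torsion pair. -/
theorem stmt3 (M0 : Set C) (Ms : List (Set C))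
    (hext : ∀ A ∈ M0 :: Ms, ExtensionClosed A)
    (hiso : ∀ A ∈ M0 :: Ms, ∀ ⦃X Y : C⦄, (X ≅ Y) → X ∈ A → Y ∈ A)
    (h0 : ∀ A ∈ M0 :: Ms, (0 : C) ∈ A)
    (hadd : ∀ A ∈ M0 :: Ms, ∀ X Y : C, X ∈ A → Y ∈ A → (X ⊞ Y) ∈ A)
    (happrox : ∀ A ∈ M0 :: Ms, ∀ Cobj : C, ∃ (B : C) (f : B ⟶ Cobj),
      IsRightApprox A f ∧ ∀ e : B ⟶ B, e ≫ f = f → IsIso e)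
    (hvanish : (M0 :: Ms).Pairwise
      (fun A B => ∀ a ∈ A, ∀ b ∈ B, ∀ f : a ⟶ b⟦(1 : ℤ)⟧, f = 0)) :
    TorsionPair {E : C | AddClosure (Ms.foldl star M0) E}
      {N : C | ∀ A ∈ M0 :: Ms, ∀ a ∈ A, ∀ f : a ⟶ N, f = 0} := by
  constructor
  · intro E hE N hN f
    exact addClosure_vanish (star_vanish M0 Ms N hN) E hE f
  · intro Z
    obtain ⟨A, B, hA, hB, f, g, h, hT⟩ := exists_torsion_triangle M0 Ms hext happrox hvanish Z
    exact ⟨A, B, AddClosure.of A hA, hB, f, g, h, hT⟩
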